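/- Let ξ ≥ 0 and β > 0 be reals. Then the set { (√u − √ξ)²/2 + β·v : u, v ∈ ℝ, 0 ≤ u ≤ v } has least element ξ·β/(1 + 2β), attained at u = v = ξ/(1 + 2β)². In particular, with β = (N−K)/2 for integers 1 ≤ K ≤ N−1, the infimum equals ξ/(2(1 + 1/(N−K))). -/

import Mathlib

open Real

/-- The constrained minimization giving the Stage-1 large-deviations decay rate
of OTSS: the infimum of `(√u - √ξ)² / 2 + β v` over `0 ≤ u ≤ v` equals
`ξ β / (1 + 2 β)`, attained at `u = v = ξ / (1 + 2 β)²`; with `β = (N - K)/2`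
the value is `ξ / (2 (1 + 1/(N - K)))`. -/
theorem stage1_rate_minimization (ξ β : ℝ) (hξ : 0 ≤ ξ) (hβ : 0 < β) :
    IsLeast {y : ℝ | ∃ u v : ℝ, 0 ≤ u ∧ u ≤ v ∧
        y = (Real.sqrt u - Real.sqrt ξ) ^ 2 / 2 + β * v} (ξ * β / (1 + 2 * β)) ∧
    ((Real.sqrt (ξ / (1 + 2 * β) ^ 2) - Real.sqrt ξ) ^ 2 / 2
        + β * (ξ / (1 + 2 * β) ^ 2) = ξ * β / (1 + 2 * β)) ∧
    (∀ N K : ℕ, 1 ≤ K → K ≤ N - 1 → β = ((N : ℝ) - K) / 2 →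
      ξ * β / (1 + 2 * β) = ξ / (2 * (1 + 1 / ((N : ℝ) - K)))) := by
  have h1 : (0:ℝ) < 1 + 2 * β := by linarith
  have hs : Real.sqrt ξ ^ 2 = ξ := Real.sq_sqrt hξ
  have hss : 0 ≤ Real.sqrt ξ := Real.sqrt_nonneg _
  have hsqrt : Real.sqrt (ξ / (1 + 2 * β) ^ 2) = Real.sqrt ξ / (1 + 2 * β) := by
    rw [Real.sqrt_div hξ, Real.sqrt_sq h1.le]
  have hval : (Real.sqrt (ξ / (1 + 2 * β) ^ 2) - Real.sqrt ξ) ^ 2 / 2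
      + β * (ξ / (1 + 2 * β) ^ 2) = ξ * β / (1 + 2 * β) := by
    rw [hsqrt]
    field_simp
    linear_combination (4*β^2) * hs
  refine ⟨⟨⟨ξ / (1 + 2 * β) ^ 2, ξ / (1 + 2 * β) ^ 2, by positivity, le_refl _,
      hval.symm⟩, ?_⟩, hval, ?_⟩
  · rintro y ⟨u, v, hu, huv, rfl⟩
    have ht : Real.sqrt u ^ 2 = u := Real.sq_sqrt hu
    have ht0 : 0 ≤ Real.sqrt u := Real.sqrt_nonneg _
    rw [div_le_iff₀ h1]
    nlinarith [sq_nonneg ((1 + 2 * β) * Real.sqrt u - Real.sqrt ξ), mul_le_mul_of_nonneg_left huv hβ.le]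
  · intro N K hK hKN hβeq
    have hlt : K < N := by omega
    have hpos : (0:ℝ) < (N : ℝ) - K := by
      have : (K:ℝ) < N := by exact_mod_cast hlt
      linarith
    rw [hβeq]
    have h2 : (0:ℝ) < 1 + 2 * (((N:ℝ) - K) / 2) := by linarith
    field_simp
    ring
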